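/- Let ι : S(𝔥*) → H and ι′ : S(𝔥) → H be the canonical algebra maps (well defined since the images of 𝔥* commute, and likewise for 𝔥). For y ∈ 𝔥 and f ∈ S(𝔥*): y ι(f) − ι(f) y = κ ι(∂_y f) − Σ_{s ∈ T} c_s ⟨α_s, y⟩ ι(g_s) t_s in H, where ∂_y is the derivation of S(𝔥*) with ∂_y(x) = ⟨x, y⟩ for x ∈ 𝔥*, and g_s ∈ S(𝔥*) is the unique element with α_s · g_s = f − s·f. Similarly, for x ∈ 𝔥* and g ∈ S(𝔥): ι′(g) x − x ι′(g) = κ ι′(∂_x g) − Σ_{s ∈ T} c_s ⟨x, α_s^∨⟩ t_s ι′(G_s) in H, where ∂_x is the derivation of S(𝔥) with ∂_x(y) = ⟨x, y⟩, and G_s ∈ S(𝔥) is the unique element with α_s^∨ · G_s = g − s⁻¹·g. -/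

import Mathlib

/-! Rational Cherednik algebra of a complex reflection group, by generators and relations. -/

/-- A reflection: an invertible linear map whose fixed subspace has codimension one. -/
def IsReflection {𝔥 : Type*} [AddCommGroup 𝔥] [Module ℂ 𝔥] (s : 𝔥 ≃ₗ[ℂ] 𝔥) : Prop :=
  Module.finrank ℂ (LinearMap.ker ((s : 𝔥 →ₗ[ℂ] 𝔥) - (LinearMap.id : 𝔥 →ₗ[ℂ] 𝔥))) + 1 =
    Module.finrank ℂ 𝔥

/-- Generators of the rational Cherednik algebra: `x f` for `f ∈ 𝔥*`, `y v` for `v ∈ 𝔥`,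
and `t w` for `w ∈ W`. -/
inductive RCAGen (D H G : Type*) where
  | x (f : D) : RCAGen D H G
  | y (v : H) : RCAGen D H G
  | t (w : G) : RCAGen D H G

open Classical in
/-- The defining relations of the rational Cherednik algebra attached to the data
`(κ, c, α, α^∨)` for the reflection group `W ⊆ GL(𝔥)`. -/
inductive RCARel {𝔥 : Type*} [AddCommGroup 𝔥] [Module ℂ 𝔥]
    (W : Subgroup (𝔥 ≃ₗ[ℂ] 𝔥)) [Fintype W] (κ : ℂ) (c : W → ℂ)
    (α : W → Module.Dual ℂ 𝔥) (αv : W → 𝔥) :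
    FreeAlgebra ℂ (RCAGen (Module.Dual ℂ 𝔥) 𝔥 W) →
      FreeAlgebra ℂ (RCAGen (Module.Dual ℂ 𝔥) 𝔥 W) → Prop
  | x_add (f g : Module.Dual ℂ 𝔥) : RCARel W κ c α αv
      (FreeAlgebra.ι ℂ (.x (f + g))) (FreeAlgebra.ι ℂ (.x f) + FreeAlgebra.ι ℂ (.x g))
  | x_smul (a : ℂ) (f : Module.Dual ℂ 𝔥) : RCARel W κ c α αv
      (FreeAlgebra.ι ℂ (.x (a • f))) (a • FreeAlgebra.ι ℂ (.x f))
  | y_add (v v' : 𝔥) : RCARel W κ c α αv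
      (FreeAlgebra.ι ℂ (.y (v + v'))) (FreeAlgebra.ι ℂ (.y v) + FreeAlgebra.ι ℂ (.y v'))
  | y_smul (a : ℂ) (v : 𝔥) : RCARel W κ c α αv
      (FreeAlgebra.ι ℂ (.y (a • v))) (a • FreeAlgebra.ι ℂ (.y v))
  | t_mul (w v : W) : RCARel W κ c α αv
      (FreeAlgebra.ι ℂ (.t (w * v))) (FreeAlgebra.ι ℂ (.t w) * FreeAlgebra.ι ℂ (.t v))
  | t_one : RCARel W κ c α αv (FreeAlgebra.ι ℂ (.t 1)) 1
  | t_x (w : W) (f : Module.Dual ℂ 𝔥) : RCARel W κ c α αv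
      (FreeAlgebra.ι ℂ (.t w) * FreeAlgebra.ι ℂ (.x f))
      (FreeAlgebra.ι ℂ (.x (f ∘ₗ ((w : 𝔥 ≃ₗ[ℂ] 𝔥).symm : 𝔥 →ₗ[ℂ] 𝔥))) *
        FreeAlgebra.ι ℂ (.t w))
  | t_y (w : W) (v : 𝔥) : RCARel W κ c α αv
      (FreeAlgebra.ι ℂ (.t w) * FreeAlgebra.ι ℂ (.y v))
      (FreeAlgebra.ι ℂ (.y ((w : 𝔥 ≃ₗ[ℂ] 𝔥) v)) * FreeAlgebra.ι ℂ (.t w))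
  | xx (f g : Module.Dual ℂ 𝔥) : RCARel W κ c α αv
      (FreeAlgebra.ι ℂ (.x f) * FreeAlgebra.ι ℂ (.x g))
      (FreeAlgebra.ι ℂ (.x g) * FreeAlgebra.ι ℂ (.x f))
  | yy (v v' : 𝔥) : RCARel W κ c α αv
      (FreeAlgebra.ι ℂ (.y v) * FreeAlgebra.ι ℂ (.y v'))
      (FreeAlgebra.ι ℂ (.y v') * FreeAlgebra.ι ℂ (.y v))
  | yx (f : Module.Dual ℂ 𝔥) (v : 𝔥) : RCARel W κ c α αv
      (FreeAlgebra.ι ℂ (.y v) * FreeAlgebra.ι ℂ (.x f))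
      (FreeAlgebra.ι ℂ (.x f) * FreeAlgebra.ι ℂ (.y v) + (κ * f v) • 1 -
        ∑ s ∈ Finset.univ.filter (fun s : W => IsReflection (s : 𝔥 ≃ₗ[ℂ] 𝔥)),
          (c s * α s v * f (αv s)) • FreeAlgebra.ι ℂ (.t s))

/-- Relations defining the symmetric algebra of a module `M`: linearity of the embedding
of `M` and commutativity of its elements. -/
inductive SymmRel (R M : Type*) [CommSemiring R] [AddCommMonoid M] [Module R M] :
    FreeAlgebra R M → FreeAlgebra R M → Prop
  | add (a b : M) : SymmRel R M (FreeAlgebra.ι R (a + b)) (FreeAlgebra.ι R a + FreeAlgebra.ι R b)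
  | smul (r : R) (a : M) : SymmRel R M (FreeAlgebra.ι R (r • a)) (r • FreeAlgebra.ι R a)
  | mul_comm (a b : M) : SymmRel R M (FreeAlgebra.ι R a * FreeAlgebra.ι R b)
      (FreeAlgebra.ι R b * FreeAlgebra.ι R a)

/-- The symmetric algebra `S(M)` of a module `M`. -/
abbrev SymmAlg (R M : Type*) [CommSemiring R] [AddCommMonoid M] [Module R M] : Type _ :=
  RingQuot (SymmRel R M)

variable (R M : Type*) [CommSemiring R] [AddCommMonoid M] [Module R M]

/-- The canonical embedding `M → S(M)`. -/
noncomputable def symmMk (a : M) : SymmAlg R M :=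
  RingQuot.mkAlgHom R (SymmRel R M) (FreeAlgebra.ι R a)

theorem symmMk_add (a b : M) : symmMk R M (a + b) = symmMk R M a + symmMk R M b := by
  have h := RingQuot.mkAlgHom_rel R (SymmRel.add (R := R) (M := M) a b)
  simpa [symmMk, map_add] using h

theorem symmMk_smul (r : R) (a : M) : symmMk R M (r • a) = r • symmMk R M a := by
  have h := RingQuot.mkAlgHom_rel R (SymmRel.smul (R := R) (M := M) r a)
  simpa [symmMk, map_smul] using h

theorem symmMk_mul_comm (a b : M) : symmMk R M a * symmMk R M b = symmMk R M b * symmMk R M a := by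
  have h := RingQuot.mkAlgHom_rel R (SymmRel.mul_comm (R := R) (M := M) a b)
  simpa [symmMk, map_mul] using h

/-- The canonical embedding of `M` into its symmetric algebra, as a linear map. -/
noncomputable def symmMkₗ : M →ₗ[R] SymmAlg R M where
  toFun := symmMk R M
  map_add' := symmMk_add R M
  map_smul' := symmMk_smul R M

variable {R M} {A : Type*} [Semiring A] [Algebra R A]

/-- Universal property of the symmetric algebra: a linear map from `M` to an algebra `A`
with pairwise commuting images extends to an algebra map `S(M) → A`. -/
noncomputable def symmLift (φ : M →ₗ[R] A) (hcomm : ∀ a b : M, φ a * φ b = φ b * φ a) :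
    SymmAlg R M →ₐ[R] A :=
  RingQuot.liftAlgHom R ⟨FreeAlgebra.lift R (φ : M → A), by
    rintro x y h
    induction h with
    | add a b => simp
    | smul r a => simp
    | mul_comm a b => simp [hcomm a b]⟩

@[simp]
theorem symmLift_symmMk (φ : M →ₗ[R] A) (hcomm : ∀ a b : M, φ a * φ b = φ b * φ a) (a : M) :
    symmLift φ hcomm (symmMk R M a) = φ a := by
  simp [symmLift, symmMk, RingQuot.liftAlgHom_mkAlgHom_apply]

section
variable {𝔥 : Type*} [AddCommGroup 𝔥] [Module ℂ 𝔥]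
  (W : Subgroup (𝔥 ≃ₗ[ℂ] 𝔥)) [Fintype W] (κ : ℂ) (c : W → ℂ)
  (α : W → Module.Dual ℂ 𝔥) (αv : W → 𝔥)

/-- The image of `x ∈ 𝔥*` in the rational Cherednik algebra. -/
noncomputable def rcaX (f : Module.Dual ℂ 𝔥) : RingQuot (RCARel W κ c α αv) :=
  RingQuot.mkAlgHom ℂ (RCARel W κ c α αv) (FreeAlgebra.ι ℂ (.x f))

/-- The image of `y ∈ 𝔥` in the rational Cherednik algebra. -/
noncomputable def rcaY (v : 𝔥) : RingQuot (RCARel W κ c α αv) :=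
  RingQuot.mkAlgHom ℂ (RCARel W κ c α αv) (FreeAlgebra.ι ℂ (.y v))

/-- The image of `t_w`, `w ∈ W`, in the rational Cherednik algebra. -/
noncomputable def rcaT (w : W) : RingQuot (RCARel W κ c α αv) :=
  RingQuot.mkAlgHom ℂ (RCARel W κ c α αv) (FreeAlgebra.ι ℂ (.t w))

/-- `𝔥* → H`, as a linear map. -/
noncomputable def rcaXₗ : Module.Dual ℂ 𝔥 →ₗ[ℂ] RingQuot (RCARel W κ c α αv) where
  toFun := rcaX W κ c α αv
  map_add' f g := by
    have h := RingQuot.mkAlgHom_rel ℂ (RCARel.x_add (W := W) (κ := κ) (c := c)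
      (α := α) (αv := αv) f g)
    simpa [rcaX, map_add] using h
  map_smul' a f := by
    have h := RingQuot.mkAlgHom_rel ℂ (RCARel.x_smul (W := W) (κ := κ) (c := c)
      (α := α) (αv := αv) a f)
    simpa [rcaX, map_smul] using h

/-- `𝔥 → H`, as a linear map. -/
noncomputable def rcaYₗ : 𝔥 →ₗ[ℂ] RingQuot (RCARel W κ c α αv) where
  toFun := rcaY W κ c α αv
  map_add' v v' := by
    have h := RingQuot.mkAlgHom_rel ℂ (RCARel.y_add (W := W) (κ := κ) (c := c)
      (α := α) (αv := αv) v v')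
    simpa [rcaY, map_add] using h
  map_smul' a v := by
    have h := RingQuot.mkAlgHom_rel ℂ (RCARel.y_smul (W := W) (κ := κ) (c := c)
      (α := α) (αv := αv) a v)
    simpa [rcaY, map_smul] using h

/-- The canonical algebra map `ι : S(𝔥*) → H` (well defined since the images of `𝔥*`
in `H` commute). -/
noncomputable def rcaIotaX : SymmAlg ℂ (Module.Dual ℂ 𝔥) →ₐ[ℂ] RingQuot (RCARel W κ c α αv) :=
  symmLift (rcaXₗ W κ c α αv) (fun f g => by
    have h := RingQuot.mkAlgHom_rel ℂ (RCARel.xx (W := W) (κ := κ) (c := c)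
      (α := α) (αv := αv) f g)
    simpa [rcaXₗ, rcaX, map_mul] using h)

/-- The canonical algebra map `ι' : S(𝔥) → H`. -/
noncomputable def rcaIotaY : SymmAlg ℂ 𝔥 →ₐ[ℂ] RingQuot (RCARel W κ c α αv) :=
  symmLift (rcaYₗ W κ c α αv) (fun v v' => by
    have h := RingQuot.mkAlgHom_rel ℂ (RCARel.yy (W := W) (κ := κ) (c := c)
      (α := α) (αv := αv) v v')
    simpa [rcaYₗ, rcaY, map_mul] using h)

variable (𝔥) in
/-- The action of `w` on `𝔥*`, `(w f)(v) = f (w⁻¹ v)`, as a linear map. -/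
noncomputable def dualAct (w : 𝔥 ≃ₗ[ℂ] 𝔥) :
    Module.Dual ℂ 𝔥 →ₗ[ℂ] Module.Dual ℂ 𝔥 where
  toFun f := f ∘ₗ (w.symm : 𝔥 →ₗ[ℂ] 𝔥)
  map_add' f g := by ext v; simp
  map_smul' a f := by ext v; simp

variable (𝔥) in
/-- The action of `w` on `S(𝔥*)` by algebra automorphisms. -/
noncomputable def symmActD (w : 𝔥 ≃ₗ[ℂ] 𝔥) :
    SymmAlg ℂ (Module.Dual ℂ 𝔥) →ₐ[ℂ] SymmAlg ℂ (Module.Dual ℂ 𝔥) :=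
  symmLift (symmMkₗ ℂ (Module.Dual ℂ 𝔥) ∘ₗ dualAct 𝔥 w)
    (fun f g => by simp [symmMkₗ, symmMk_mul_comm])

variable (𝔥) in
/-- The action of `w` on `S(𝔥)` by algebra automorphisms. -/
noncomputable def symmActH (w : 𝔥 ≃ₗ[ℂ] 𝔥) : SymmAlg ℂ 𝔥 →ₐ[ℂ] SymmAlg ℂ 𝔥 :=
  symmLift (symmMkₗ ℂ 𝔥 ∘ₗ (w : 𝔥 →ₗ[ℂ] 𝔥))
    (fun v v' => by simp [symmMkₗ, symmMk_mul_comm])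

section SymmAlgComm

variable {N : Type*} [AddCommGroup N] [Module ℂ N]

theorem symmAlg_induction {P : SymmAlg ℂ N → Prop}
    (halg : ∀ r : ℂ, P (algebraMap ℂ _ r)) (hmk : ∀ m : N, P (symmMk ℂ N m))
    (hadd : ∀ a b, P a → P b → P (a + b)) (hmul : ∀ a b, P a → P b → P (a * b)) :
    ∀ z : SymmAlg ℂ N, P z := by
  intro z
  obtain ⟨a, rfl⟩ := RingQuot.mkAlgHom_surjective ℂ (SymmRel ℂ N) z
  induction a using FreeAlgebra.induction with
  | grade0 r => simpa using halg r
  | grade1 m => exact hmk m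
  | add a b ha hb => rw [map_add]; exact hadd _ _ ha hb
  | mul a b ha hb => rw [map_mul]; exact hmul _ _ ha hb

theorem symmAlg_mul_comm (a b : SymmAlg ℂ N) : a * b = b * a := by
  induction a using symmAlg_induction with
  | halg r => rw [Algebra.commutes]
  | hadd a1 a2 h1 h2 => rw [add_mul, mul_add, h1, h2]
  | hmul a1 a2 h1 h2 => rw [mul_assoc, h2, ← mul_assoc, h1, mul_assoc]
  | hmk m =>
    induction b using symmAlg_induction with
    | halg r => rw [Algebra.commutes]
    | hmk m' => exact symmMk_mul_comm ℂ N m m'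
    | hadd b1 b2 h1 h2 => rw [add_mul, mul_add, h1, h2]
    | hmul b1 b2 h1 h2 => rw [← mul_assoc, h1, mul_assoc, h2, ← mul_assoc]

noncomputable instance : CommRing (SymmAlg ℂ N) :=
  { (inferInstance : Ring (SymmAlg ℂ N)) with mul_comm := symmAlg_mul_comm }

noncomputable def symmToPoly :
    SymmAlg ℂ N →ₐ[ℂ] MvPolynomial (Module.Basis.ofVectorSpaceIndex ℂ N) ℂ :=
  symmLift ((Finsupp.linearCombination ℂ MvPolynomial.X).comp
      (Module.Basis.ofVectorSpace ℂ N).repr.toLinearMap)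
    (fun _ _ => mul_comm _ _)

noncomputable def polyToSymm :
    MvPolynomial (Module.Basis.ofVectorSpaceIndex ℂ N) ℂ →ₐ[ℂ] SymmAlg ℂ N :=
  MvPolynomial.aeval (fun i => symmMk ℂ N (Module.Basis.ofVectorSpace ℂ N i))

theorem polyToSymm_symmToPoly (z : SymmAlg ℂ N) : polyToSymm (symmToPoly z) = z := by
  induction z using symmAlg_induction with
  | halg r => simp
  | hadd a b ha hb => simp [ha, hb]
  | hmul a b ha hb => simp [ha, hb]
  | hmk m =>
    set b := Module.Basis.ofVectorSpace ℂ N with hb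
    have h1 : symmToPoly (symmMk ℂ N m)
        = (b.repr m).sum fun i r => r • MvPolynomial.X i := by
      simp [symmToPoly, Finsupp.linearCombination_apply, hb]
    rw [h1]
    have h2 : polyToSymm ((b.repr m).sum fun i r => r • MvPolynomial.X i)
        = symmMkₗ ℂ N ((b.repr m).sum fun i r => r • b i) := by
      rw [map_finsuppSum, map_finsuppSum]
      refine Finset.sum_congr rfl fun i _ => ?_
      simp [polyToSymm, symmMkₗ, hb, Module.Basis.ofVectorSpace_apply_self]
    rw [h2, ← Finsupp.linearCombination_apply, b.linearCombination_repr m]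
    rfl

theorem symmToPoly_injective :
    Function.Injective (symmToPoly : SymmAlg ℂ N → _) :=
  Function.LeftInverse.injective polyToSymm_symmToPoly

theorem symmMk_ne_zero {m : N} (hm : m ≠ 0) : symmMk ℂ N m ≠ 0 := by
  obtain ⟨φ, hφ⟩ : ∃ φ : Module.Dual ℂ N, φ m ≠ 0 := by
    by_contra h
    push_neg at h
    exact hm ((Module.forall_dual_apply_eq_zero_iff ℂ m).mp h)
  intro h0
  have := congrArg (symmLift (A := ℂ) φ (fun _ _ => mul_comm _ _)) h0
  simp at this
  exact hφ this

theorem symmMk_mul_cancel {m : N} (hm : m ≠ 0) {a b : SymmAlg ℂ N}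
    (h : symmMk ℂ N m * a = symmMk ℂ N m * b) : a = b := by
  apply symmToPoly_injective
  have h' := congrArg symmToPoly h
  rw [map_mul, map_mul] at h'
  refine mul_left_cancel₀ (fun h0 => symmMk_ne_zero hm ?_) h'
  exact symmToPoly_injective (by simpa using h0)

end SymmAlgComm

theorem symmMk_sub {N : Type*} [AddCommGroup N] [Module ℂ N] (a b : N) :
    symmMk ℂ N (a - b) = symmMk ℂ N a - symmMk ℂ N b :=
  map_sub (symmMkₗ ℂ N) a b

theorem isReflection_one_false {𝔥' : Type*} [AddCommGroup 𝔥'] [Module ℂ 𝔥']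
    (h : IsReflection (1 : 𝔥' ≃ₗ[ℂ] 𝔥')) : False := by
  unfold IsReflection at h
  have h1 : ((1 : 𝔥' ≃ₗ[ℂ] 𝔥') : 𝔥' →ₗ[ℂ] 𝔥') - LinearMap.id = 0 := by
    ext u; simp
  rw [h1, LinearMap.ker_zero] at h
  rw [finrank_top] at h
  omega

section RCALemmas

variable {𝔥 : Type*} [AddCommGroup 𝔥] [Module ℂ 𝔥]
  (W : Subgroup (𝔥 ≃ₗ[ℂ] 𝔥)) [Fintype W] (κ : ℂ) (c : W → ℂ)
  (α : W → Module.Dual ℂ 𝔥) (αv : W → 𝔥)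

theorem rcaIotaX_symmMk (f : Module.Dual ℂ 𝔥) :
    rcaIotaX W κ c α αv (symmMk ℂ _ f) = rcaX W κ c α αv f := by
  simp [rcaIotaX, rcaXₗ]

theorem rcaIotaY_symmMk (u : 𝔥) :
    rcaIotaY W κ c α αv (symmMk ℂ _ u) = rcaY W κ c α αv u := by
  simp [rcaIotaY, rcaYₗ]

theorem symmActD_symmMk (w : 𝔥 ≃ₗ[ℂ] 𝔥) (f : Module.Dual ℂ 𝔥) :
    symmActD 𝔥 w (symmMk ℂ _ f) = symmMk ℂ _ (f ∘ₗ (w.symm : 𝔥 →ₗ[ℂ] 𝔥)) := by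
  simp [symmActD, symmMkₗ, dualAct]

theorem symmActH_symmMk (w : 𝔥 ≃ₗ[ℂ] 𝔥) (u : 𝔥) :
    symmActH 𝔥 w (symmMk ℂ _ u) = symmMk ℂ _ (w u) := by
  simp [symmActH, symmMkₗ]

theorem rcaT_one : rcaT W κ c α αv 1 = 1 := by
  have h := RingQuot.mkAlgHom_rel ℂ
    (RCARel.t_one (W := W) (κ := κ) (c := c) (α := α) (αv := αv))
  simpa [rcaT, map_one] using h

theorem rcaT_mul (w v : W) :
    rcaT W κ c α αv (w * v) = rcaT W κ c α αv w * rcaT W κ c α αv v := by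
  have h := RingQuot.mkAlgHom_rel ℂ
    (RCARel.t_mul (W := W) (κ := κ) (c := c) (α := α) (αv := αv) w v)
  simpa [rcaT, map_mul] using h

theorem rcaT_mul_inv (w : W) : rcaT W κ c α αv w * rcaT W κ c α αv w⁻¹ = 1 := by
  rw [← rcaT_mul, mul_inv_cancel, rcaT_one]

theorem rcaT_inv_mul (w : W) : rcaT W κ c α αv w⁻¹ * rcaT W κ c α αv w = 1 := by
  rw [← rcaT_mul, inv_mul_cancel, rcaT_one]

theorem rcaT_mul_rcaX (w : W) (f : Module.Dual ℂ 𝔥) :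
    rcaT W κ c α αv w * rcaX W κ c α αv f
      = rcaX W κ c α αv (f ∘ₗ ((w : 𝔥 ≃ₗ[ℂ] 𝔥).symm : 𝔥 →ₗ[ℂ] 𝔥)) * rcaT W κ c α αv w := by
  have h := RingQuot.mkAlgHom_rel ℂ
    (RCARel.t_x (W := W) (κ := κ) (c := c) (α := α) (αv := αv) w f)
  simpa [rcaT, rcaX, map_mul] using h

theorem rcaT_mul_rcaY (w : W) (u : 𝔥) :
    rcaT W κ c α αv w * rcaY W κ c α αv u
      = rcaY W κ c α αv ((w : 𝔥 ≃ₗ[ℂ] 𝔥) u) * rcaT W κ c α αv w := by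
  have h := RingQuot.mkAlgHom_rel ℂ
    (RCARel.t_y (W := W) (κ := κ) (c := c) (α := α) (αv := αv) w u)
  simpa [rcaT, rcaY, map_mul] using h

open Classical in
theorem rcaY_mul_rcaX (u : 𝔥) (f : Module.Dual ℂ 𝔥) :
    rcaY W κ c α αv u * rcaX W κ c α αv f
      = rcaX W κ c α αv f * rcaY W κ c α αv u + (κ * f u) • 1 -
        ∑ s ∈ Finset.univ.filter (fun s : W => IsReflection (s : 𝔥 ≃ₗ[ℂ] 𝔥)),
          (c s * α s u * f (αv s)) • rcaT W κ c α αv s := by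
  have h := RingQuot.mkAlgHom_rel ℂ
    (RCARel.yx (W := W) (κ := κ) (c := c) (α := α) (αv := αv) f u)
  simpa [rcaT, rcaX, rcaY, map_mul, map_sub, map_add, map_sum] using h

theorem rcaT_mul_iotaX (w : W) (f : SymmAlg ℂ (Module.Dual ℂ 𝔥)) :
    rcaT W κ c α αv w * rcaIotaX W κ c α αv f
      = rcaIotaX W κ c α αv (symmActD 𝔥 (w : 𝔥 ≃ₗ[ℂ] 𝔥) f) * rcaT W κ c α αv w := by
  induction f using symmAlg_induction with
  | halg r =>
    simp only [AlgHom.commutes]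
    exact (Algebra.commutes r _).symm
  | hmk x =>
    rw [rcaIotaX_symmMk, symmActD_symmMk, rcaIotaX_symmMk]
    exact rcaT_mul_rcaX W κ c α αv w x
  | hadd a b ha hb => rw [map_add, map_add, map_add, mul_add, add_mul, ha, hb]
  | hmul a b ha hb =>
    rw [map_mul, map_mul, map_mul, ← mul_assoc, ha, mul_assoc, hb, ← mul_assoc]

theorem rcaT_mul_iotaY (w : W) (g : SymmAlg ℂ 𝔥) :
    rcaT W κ c α αv w * rcaIotaY W κ c α αv g
      = rcaIotaY W κ c α αv (symmActH 𝔥 (w : 𝔥 ≃ₗ[ℂ] 𝔥) g) * rcaT W κ c α αv w := by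
  induction g using symmAlg_induction with
  | halg r =>
    simp only [AlgHom.commutes]
    exact (Algebra.commutes r _).symm
  | hmk u =>
    rw [rcaIotaY_symmMk, symmActH_symmMk, rcaIotaY_symmMk]
    exact rcaT_mul_rcaY W κ c α αv w u
  | hadd a b ha hb => rw [map_add, map_add, map_add, mul_add, add_mul, ha, hb]
  | hmul a b ha hb =>
    rw [map_mul, map_mul, map_mul, ← mul_assoc, ha, mul_assoc, hb, ← mul_assoc]

theorem iotaY_mul_rcaT (s : W) (g : SymmAlg ℂ 𝔥) :
    rcaIotaY W κ c α αv g * rcaT W κ c α αv s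
      = rcaT W κ c α αv s *
        rcaIotaY W κ c α αv (symmActH 𝔥 ((s⁻¹ : W) : 𝔥 ≃ₗ[ℂ] 𝔥) g) := by
  have h := rcaT_mul_iotaY W κ c α αv s⁻¹ g
  calc rcaIotaY W κ c α αv g * rcaT W κ c α αv s
      = (rcaT W κ c α αv s * rcaT W κ c α αv s⁻¹) * rcaIotaY W κ c α αv g *
        rcaT W κ c α αv s := by rw [rcaT_mul_inv, one_mul]
    _ = rcaT W κ c α αv s * (rcaT W κ c α αv s⁻¹ * rcaIotaY W κ c α αv g) *
        rcaT W κ c α αv s := by rw [mul_assoc (rcaT W κ c α αv s)]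
    _ = rcaT W κ c α αv s *
        (rcaIotaY W κ c α αv (symmActH 𝔥 ((s⁻¹ : W) : 𝔥 ≃ₗ[ℂ] 𝔥) g) *
          rcaT W κ c α αv s⁻¹) * rcaT W κ c α αv s := by rw [h]
    _ = rcaT W κ c α αv s *
        rcaIotaY W κ c α αv (symmActH 𝔥 ((s⁻¹ : W) : 𝔥 ≃ₗ[ℂ] 𝔥) g) *
        (rcaT W κ c α αv s⁻¹ * rcaT W κ c α αv s) := by
          rw [mul_assoc, mul_assoc, mul_assoc]
    _ = _ := by rw [rcaT_inv_mul, mul_one]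

end RCALemmas

section MainLemmas

variable {𝔥 : Type*} [AddCommGroup 𝔥] [Module ℂ 𝔥]
  (W : Subgroup (𝔥 ≃ₗ[ℂ] 𝔥)) [Fintype W] (κ : ℂ) (c : W → ℂ)
  (α : W → Module.Dual ℂ 𝔥) (αv : W → 𝔥)

variable (hα : ∀ s : W, IsReflection (s : 𝔥 ≃ₗ[ℂ] 𝔥) →
      ∀ v : 𝔥, (s : 𝔥 ≃ₗ[ℂ] 𝔥).symm v = v - α s v • αv s)

include hα in
theorem alpha_ne_zero (s : W) (hs : IsReflection (s : 𝔥 ≃ₗ[ℂ] 𝔥)) : α s ≠ 0 := by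
  intro h0
  have h1 : (s : 𝔥 ≃ₗ[ℂ] 𝔥) = 1 := by
    ext u
    have h2 := hα s hs ((s : 𝔥 ≃ₗ[ℂ] 𝔥) u)
    rw [h0] at h2
    simpa using h2.symm
  exact isReflection_one_false (h1 ▸ hs)

include hα in
theorem alphav_ne_zero (s : W) (hs : IsReflection (s : 𝔥 ≃ₗ[ℂ] 𝔥)) : αv s ≠ 0 := by
  intro h0
  have h1 : (s : 𝔥 ≃ₗ[ℂ] 𝔥) = 1 := by
    ext u
    have h2 := hα s hs ((s : 𝔥 ≃ₗ[ℂ] 𝔥) u)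
    rw [h0] at h2
    simpa using h2.symm
  exact isReflection_one_false (h1 ▸ hs)

open Classical in
include hα in
set_option maxHeartbeats 1000000 in
theorem part1 (v : 𝔥)
    (D : SymmAlg ℂ (Module.Dual ℂ 𝔥) →ₗ[ℂ] SymmAlg ℂ (Module.Dual ℂ 𝔥))
    (hD : ∀ a b, D (a * b) = D a * b + a * D b)
    (hDx : ∀ x : Module.Dual ℂ 𝔥, D (symmMk ℂ (Module.Dual ℂ 𝔥) x) = algebraMap ℂ _ (x v)) :
    ∀ f : SymmAlg ℂ (Module.Dual ℂ 𝔥), ∃ gs : W → SymmAlg ℂ (Module.Dual ℂ 𝔥),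
      (∀ s : W, IsReflection (s : 𝔥 ≃ₗ[ℂ] 𝔥) →
        symmMk ℂ (Module.Dual ℂ 𝔥) (α s) * gs s = f - symmActD 𝔥 (s : 𝔥 ≃ₗ[ℂ] 𝔥) f) ∧
      rcaY W κ c α αv v * rcaIotaX W κ c α αv f -
          rcaIotaX W κ c α αv f * rcaY W κ c α αv v =
        κ • rcaIotaX W κ c α αv (D f) -
          ∑ s ∈ Finset.univ.filter (fun s : W => IsReflection (s : 𝔥 ≃ₗ[ℂ] 𝔥)),
            (c s * α s v) • (rcaIotaX W κ c α αv (gs s) * rcaT W κ c α αv s) := by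
  have hD1 : D 1 = 0 := by
    have h := hD 1 1
    rw [mul_one, mul_one, one_mul] at h
    nth_rewrite 1 [← add_zero (D 1)] at h
    exact (add_left_cancel h).symm
  intro f
  induction f using symmAlg_induction with
  | halg r =>
    refine ⟨0, fun s hs => by simp, ?_⟩
    have hDr : D (algebraMap ℂ _ r) = 0 := by
      rw [Algebra.algebraMap_eq_smul_one, map_smul, hD1, smul_zero]
    have h1 : (rcaIotaX W κ c α αv) (algebraMap ℂ _ r) = algebraMap ℂ _ r :=
      AlgHom.commutes _ r
    rw [hDr, map_zero, smul_zero, h1, Algebra.commutes, sub_self]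
    simp
  | hmk x =>
    refine ⟨fun s => x (αv s) • 1, fun s hs => ?_, ?_⟩
    · rw [symmActD_symmMk]
      have h2 : (x ∘ₗ (((s : 𝔥 ≃ₗ[ℂ] 𝔥)).symm : 𝔥 →ₗ[ℂ] 𝔥)) = x - x (αv s) • α s := by
        ext u
        simp [hα s hs u, mul_comm]
      rw [h2, symmMk_sub, symmMk_smul, mul_smul_comm, mul_one, sub_sub_cancel]
    · rw [rcaIotaX_symmMk, hDx]
      rw [rcaY_mul_rcaX W κ c α αv v x]
      have hK : κ • (rcaIotaX W κ c α αv) (algebraMap ℂ _ (x v))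
          = (κ * x v) • (1 : RingQuot (RCARel W κ c α αv)) := by
        rw [AlgHom.commutes, Algebra.algebraMap_eq_smul_one, smul_smul]
      rw [hK]
      have hS : ∑ s ∈ Finset.univ.filter (fun s : W => IsReflection (s : 𝔥 ≃ₗ[ℂ] 𝔥)),
            (c s * α s v) • (rcaIotaX W κ c α αv (x (αv s) • 1) * rcaT W κ c α αv s)
          = ∑ s ∈ Finset.univ.filter (fun s : W => IsReflection (s : 𝔥 ≃ₗ[ℂ] 𝔥)),
            (c s * α s v * x (αv s)) • rcaT W κ c α αv s := by
        refine Finset.sum_congr rfl fun s _ => ?_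
        rw [map_smul, map_one, smul_mul_assoc, one_mul, smul_smul]
      rw [hS]
      abel
  | hadd a b ha hb =>
    obtain ⟨g1, hc1, hi1⟩ := ha
    obtain ⟨g2, hc2, hi2⟩ := hb
    refine ⟨g1 + g2, fun s hs => ?_, ?_⟩
    · simp only [Pi.add_apply, map_add, mul_add, hc1 s hs, hc2 s hs]
      ring
    · have hs : ∑ s ∈ Finset.univ.filter (fun s : W => IsReflection (s : 𝔥 ≃ₗ[ℂ] 𝔥)),
            (c s * α s v) • (rcaIotaX W κ c α αv ((g1 + g2) s) * rcaT W κ c α αv s)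
          = (∑ s ∈ Finset.univ.filter (fun s : W => IsReflection (s : 𝔥 ≃ₗ[ℂ] 𝔥)),
              (c s * α s v) • (rcaIotaX W κ c α αv (g1 s) * rcaT W κ c α αv s))
            + ∑ s ∈ Finset.univ.filter (fun s : W => IsReflection (s : 𝔥 ≃ₗ[ℂ] 𝔥)),
              (c s * α s v) • (rcaIotaX W κ c α αv (g2 s) * rcaT W κ c α αv s) := by
        rw [← Finset.sum_add_distrib]
        refine Finset.sum_congr rfl fun s _ => ?_
        rw [Pi.add_apply, map_add, add_mul, smul_add]
      rw [hs, map_add, map_add, map_add, smul_add]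
      calc rcaY W κ c α αv v * (rcaIotaX W κ c α αv a + rcaIotaX W κ c α αv b) -
            (rcaIotaX W κ c α αv a + rcaIotaX W κ c α αv b) * rcaY W κ c α αv v
          = (rcaY W κ c α αv v * rcaIotaX W κ c α αv a -
              rcaIotaX W κ c α αv a * rcaY W κ c α αv v)
            + (rcaY W κ c α αv v * rcaIotaX W κ c α αv b -
              rcaIotaX W κ c α αv b * rcaY W κ c α αv v) := by noncomm_ring
        _ = _ := by rw [hi1, hi2]; abel
  | hmul a b ha hb =>
    obtain ⟨g1, hc1, hi1⟩ := ha
    obtain ⟨g2, hc2, hi2⟩ := hb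
    refine ⟨fun s => g1 s * symmActD 𝔥 (s : 𝔥 ≃ₗ[ℂ] 𝔥) b + a * g2 s, fun s hs => ?_, ?_⟩
    · have e1 := hc1 s hs
      have e2 := hc2 s hs
      have h3 : symmMk ℂ (Module.Dual ℂ 𝔥) (α s) *
            (g1 s * symmActD 𝔥 (s : 𝔥 ≃ₗ[ℂ] 𝔥) b + a * g2 s)
          = (symmMk ℂ (Module.Dual ℂ 𝔥) (α s) * g1 s) * symmActD 𝔥 (s : 𝔥 ≃ₗ[ℂ] 𝔥) b
            + a * (symmMk ℂ (Module.Dual ℂ 𝔥) (α s) * g2 s) := by ring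
      rw [h3, e1, e2, map_mul]
      ring
    · have hκterm : (rcaIotaX W κ c α αv) (D (a * b))
          = rcaIotaX W κ c α αv (D a) * rcaIotaX W κ c α αv b
            + rcaIotaX W κ c α αv a * rcaIotaX W κ c α αv (D b) := by
        rw [hD, map_add, map_mul, map_mul]
      have hsum : ∑ s ∈ Finset.univ.filter (fun s : W => IsReflection (s : 𝔥 ≃ₗ[ℂ] 𝔥)),
            (c s * α s v) • (rcaIotaX W κ c α αv
              ((fun s => g1 s * symmActD 𝔥 (s : 𝔥 ≃ₗ[ℂ] 𝔥) b + a * g2 s) s)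
              * rcaT W κ c α αv s)
          = (∑ s ∈ Finset.univ.filter (fun s : W => IsReflection (s : 𝔥 ≃ₗ[ℂ] 𝔥)),
              ((c s * α s v) • (rcaIotaX W κ c α αv (g1 s) * rcaT W κ c α αv s))
                * rcaIotaX W κ c α αv b)
            + ∑ s ∈ Finset.univ.filter (fun s : W => IsReflection (s : 𝔥 ≃ₗ[ℂ] 𝔥)),
              rcaIotaX W κ c α αv a *
                ((c s * α s v) • (rcaIotaX W κ c α αv (g2 s) * rcaT W κ c α αv s)) := by
        rw [← Finset.sum_add_distrib]
        refine Finset.sum_congr rfl fun s _ => ?_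
        simp only
        rw [map_add, map_mul, map_mul, add_mul, smul_add]
        congr 1
        · rw [smul_mul_assoc, mul_assoc, mul_assoc, rcaT_mul_iotaX]
        · rw [mul_smul_comm, mul_assoc]
      rw [hsum, hκterm, smul_add]
      have step1 : rcaY W κ c α αv v * rcaIotaX W κ c α αv (a * b) -
            rcaIotaX W κ c α αv (a * b) * rcaY W κ c α αv v
          = (rcaY W κ c α αv v * rcaIotaX W κ c α αv a -
              rcaIotaX W κ c α αv a * rcaY W κ c α αv v) * rcaIotaX W κ c α αv b
            + rcaIotaX W κ c α αv a *
              (rcaY W κ c α αv v * rcaIotaX W κ c α αv b -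
                rcaIotaX W κ c α αv b * rcaY W κ c α αv v) := by
        rw [map_mul, sub_mul, mul_sub]
        simp only [mul_assoc]
        abel
      rw [step1, hi1, hi2, sub_mul, mul_sub, smul_mul_assoc, mul_smul_comm,
        Finset.sum_mul, Finset.mul_sum]
      abel


theorem coe_inv_apply (s : W) (u : 𝔥) :
    ((s⁻¹ : W) : 𝔥 ≃ₗ[ℂ] 𝔥) u = (s : 𝔥 ≃ₗ[ℂ] 𝔥).symm u := rfl

open Classical in
include hα in
set_option maxHeartbeats 1000000 in
theorem part2 (x : Module.Dual ℂ 𝔥)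
    (D' : SymmAlg ℂ 𝔥 →ₗ[ℂ] SymmAlg ℂ 𝔥)
    (hD' : ∀ a b, D' (a * b) = D' a * b + a * D' b)
    (hDu : ∀ u : 𝔥, D' (symmMk ℂ 𝔥 u) = algebraMap ℂ _ (x u)) :
    ∀ g : SymmAlg ℂ 𝔥, ∃ Gs : W → SymmAlg ℂ 𝔥,
      (∀ s : W, IsReflection (s : 𝔥 ≃ₗ[ℂ] 𝔥) →
        symmMk ℂ 𝔥 (αv s) * Gs s = g - symmActH 𝔥 ((s⁻¹ : W) : 𝔥 ≃ₗ[ℂ] 𝔥) g) ∧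
      rcaIotaY W κ c α αv g * rcaX W κ c α αv x -
          rcaX W κ c α αv x * rcaIotaY W κ c α αv g =
        κ • rcaIotaY W κ c α αv (D' g) -
          ∑ s ∈ Finset.univ.filter (fun s : W => IsReflection (s : 𝔥 ≃ₗ[ℂ] 𝔥)),
            (c s * x (αv s)) • (rcaT W κ c α αv s * rcaIotaY W κ c α αv (Gs s)) := by
  have hD1 : D' 1 = 0 := by
    have h := hD' 1 1
    rw [mul_one, mul_one, one_mul] at h
    nth_rewrite 1 [← add_zero (D' 1)] at h
    exact (add_left_cancel h).symm
  intro g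
  induction g using symmAlg_induction with
  | halg r =>
    refine ⟨0, fun s hs => by simp, ?_⟩
    have hDr : D' (algebraMap ℂ _ r) = 0 := by
      rw [Algebra.algebraMap_eq_smul_one, map_smul, hD1, smul_zero]
    have h1 : (rcaIotaY W κ c α αv) (algebraMap ℂ _ r) = algebraMap ℂ _ r :=
      AlgHom.commutes _ r
    rw [hDr, map_zero, smul_zero, h1, Algebra.commutes, sub_self]
    simp
  | hmk u =>
    refine ⟨fun s => α s u • 1, fun s hs => ?_, ?_⟩
    · rw [symmActH_symmMk]
      have h2 : ((s⁻¹ : W) : 𝔥 ≃ₗ[ℂ] 𝔥) u = u - α s u • αv s := by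
        rw [coe_inv_apply]
        exact hα s hs u
      rw [h2, symmMk_sub, symmMk_smul, mul_smul_comm, mul_one, sub_sub_cancel]
    · rw [rcaIotaY_symmMk, hDu]
      rw [rcaY_mul_rcaX W κ c α αv u x]
      have hK : κ • (rcaIotaY W κ c α αv) (algebraMap ℂ _ (x u))
          = (κ * x u) • (1 : RingQuot (RCARel W κ c α αv)) := by
        rw [AlgHom.commutes, Algebra.algebraMap_eq_smul_one, smul_smul]
      rw [hK]
      have hS : ∑ s ∈ Finset.univ.filter (fun s : W => IsReflection (s : 𝔥 ≃ₗ[ℂ] 𝔥)),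
            (c s * x (αv s)) • (rcaT W κ c α αv s * rcaIotaY W κ c α αv (α s u • 1))
          = ∑ s ∈ Finset.univ.filter (fun s : W => IsReflection (s : 𝔥 ≃ₗ[ℂ] 𝔥)),
            (c s * α s u * x (αv s)) • rcaT W κ c α αv s := by
        refine Finset.sum_congr rfl fun s _ => ?_
        rw [map_smul, map_one, mul_smul_comm, mul_one, smul_smul]
        congr 1
        ring
      rw [hS]
      abel
  | hadd a b ha hb =>
    obtain ⟨G1, hc1, hi1⟩ := ha
    obtain ⟨G2, hc2, hi2⟩ := hb
    refine ⟨G1 + G2, fun s hs => ?_, ?_⟩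
    · simp only [Pi.add_apply, map_add, mul_add, hc1 s hs, hc2 s hs]
      ring
    · have hs : ∑ s ∈ Finset.univ.filter (fun s : W => IsReflection (s : 𝔥 ≃ₗ[ℂ] 𝔥)),
            (c s * x (αv s)) • (rcaT W κ c α αv s * rcaIotaY W κ c α αv ((G1 + G2) s))
          = (∑ s ∈ Finset.univ.filter (fun s : W => IsReflection (s : 𝔥 ≃ₗ[ℂ] 𝔥)),
              (c s * x (αv s)) • (rcaT W κ c α αv s * rcaIotaY W κ c α αv (G1 s)))
            + ∑ s ∈ Finset.univ.filter (fun s : W => IsReflection (s : 𝔥 ≃ₗ[ℂ] 𝔥)),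
              (c s * x (αv s)) • (rcaT W κ c α αv s * rcaIotaY W κ c α αv (G2 s)) := by
        rw [← Finset.sum_add_distrib]
        refine Finset.sum_congr rfl fun s _ => ?_
        rw [Pi.add_apply, map_add, mul_add, smul_add]
      rw [hs, map_add, map_add, map_add, smul_add]
      calc (rcaIotaY W κ c α αv a + rcaIotaY W κ c α αv b) * rcaX W κ c α αv x -
            rcaX W κ c α αv x * (rcaIotaY W κ c α αv a + rcaIotaY W κ c α αv b)
          = (rcaIotaY W κ c α αv a * rcaX W κ c α αv x -
              rcaX W κ c α αv x * rcaIotaY W κ c α αv a)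
            + (rcaIotaY W κ c α αv b * rcaX W κ c α αv x -
              rcaX W κ c α αv x * rcaIotaY W κ c α αv b) := by noncomm_ring
        _ = _ := by rw [hi1, hi2]; abel
  | hmul a b ha hb =>
    obtain ⟨G1, hc1, hi1⟩ := ha
    obtain ⟨G2, hc2, hi2⟩ := hb
    refine ⟨fun s => symmActH 𝔥 ((s⁻¹ : W) : 𝔥 ≃ₗ[ℂ] 𝔥) a * G2 s + G1 s * b,
      fun s hs => ?_, ?_⟩
    · have e1 := hc1 s hs
      have e2 := hc2 s hs
      have h3 : symmMk ℂ 𝔥 (αv s) *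
            (symmActH 𝔥 ((s⁻¹ : W) : 𝔥 ≃ₗ[ℂ] 𝔥) a * G2 s + G1 s * b)
          = symmActH 𝔥 ((s⁻¹ : W) : 𝔥 ≃ₗ[ℂ] 𝔥) a * (symmMk ℂ 𝔥 (αv s) * G2 s)
            + (symmMk ℂ 𝔥 (αv s) * G1 s) * b := by ring
      rw [h3, e1, e2, map_mul]
      ring
    · have hκterm : (rcaIotaY W κ c α αv) (D' (a * b))
          = rcaIotaY W κ c α αv (D' a) * rcaIotaY W κ c α αv b
            + rcaIotaY W κ c α αv a * rcaIotaY W κ c α αv (D' b) := by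
        rw [hD', map_add, map_mul, map_mul]
      have hsum : ∑ s ∈ Finset.univ.filter (fun s : W => IsReflection (s : 𝔥 ≃ₗ[ℂ] 𝔥)),
            (c s * x (αv s)) • (rcaT W κ c α αv s * rcaIotaY W κ c α αv
              ((fun s => symmActH 𝔥 ((s⁻¹ : W) : 𝔥 ≃ₗ[ℂ] 𝔥) a * G2 s + G1 s * b) s))
          = (∑ s ∈ Finset.univ.filter (fun s : W => IsReflection (s : 𝔥 ≃ₗ[ℂ] 𝔥)),
              rcaIotaY W κ c α αv a *
                ((c s * x (αv s)) • (rcaT W κ c α αv s * rcaIotaY W κ c α αv (G2 s))))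
            + ∑ s ∈ Finset.univ.filter (fun s : W => IsReflection (s : 𝔥 ≃ₗ[ℂ] 𝔥)),
              ((c s * x (αv s)) • (rcaT W κ c α αv s * rcaIotaY W κ c α αv (G1 s)))
                * rcaIotaY W κ c α αv b := by
        rw [← Finset.sum_add_distrib]
        refine Finset.sum_congr rfl fun s _ => ?_
        simp only
        rw [map_add, map_mul, map_mul, mul_add, smul_add]
        congr 1
        · rw [mul_smul_comm]
          congr 1
          rw [← mul_assoc, ← iotaY_mul_rcaT, mul_assoc]
        · rw [smul_mul_assoc]
          congr 1
          rw [mul_assoc]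
      rw [hsum, hκterm, smul_add]
      have step1 : rcaIotaY W κ c α αv (a * b) * rcaX W κ c α αv x -
            rcaX W κ c α αv x * rcaIotaY W κ c α αv (a * b)
          = rcaIotaY W κ c α αv a *
              (rcaIotaY W κ c α αv b * rcaX W κ c α αv x -
                rcaX W κ c α αv x * rcaIotaY W κ c α αv b)
            + (rcaIotaY W κ c α αv a * rcaX W κ c α αv x -
                rcaX W κ c α αv x * rcaIotaY W κ c α αv a) * rcaIotaY W κ c α αv b := by
        rw [map_mul, mul_sub, sub_mul]
        simp only [mul_assoc]
        abel
      rw [step1, hi1, hi2, mul_sub, sub_mul, mul_smul_comm, smul_mul_assoc,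
        Finset.mul_sum, Finset.sum_mul]
      abel

end MainLemmas

open Classical in
/-- The fundamental commutation relations between `𝔥`, `𝔥*` and the
subalgebras `S(𝔥*)`, `S(𝔥)` of the rational Cherednik algebra, in terms of derivatives
and divided differences. -/
theorem stmt2 [FiniteDimensional ℂ 𝔥]
    (hW : Subgroup.closure {s : 𝔥 ≃ₗ[ℂ] 𝔥 | s ∈ W ∧ IsReflection s} = W)
    (hα : ∀ s : W, IsReflection (s : 𝔥 ≃ₗ[ℂ] 𝔥) →
      ∀ v : 𝔥, (s : 𝔥 ≃ₗ[ℂ] 𝔥).symm v = v - α s v • αv s)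
    (hc : ∀ w s : W, IsReflection (s : 𝔥 ≃ₗ[ℂ] 𝔥) → c (w * s * w⁻¹) = c s) :
    (∀ (v : 𝔥) (f : SymmAlg ℂ (Module.Dual ℂ 𝔥))
      (D : SymmAlg ℂ (Module.Dual ℂ 𝔥) →ₗ[ℂ] SymmAlg ℂ (Module.Dual ℂ 𝔥)),
      (∀ a b, D (a * b) = D a * b + a * D b) →
      (∀ x : Module.Dual ℂ 𝔥, D (symmMk ℂ (Module.Dual ℂ 𝔥) x) = algebraMap ℂ _ (x v)) →
      ∀ gs : W → SymmAlg ℂ (Module.Dual ℂ 𝔥),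
      (∀ s : W, IsReflection (s : 𝔥 ≃ₗ[ℂ] 𝔥) →
        symmMk ℂ (Module.Dual ℂ 𝔥) (α s) * gs s = f - symmActD 𝔥 (s : 𝔥 ≃ₗ[ℂ] 𝔥) f) →
      rcaY W κ c α αv v * rcaIotaX W κ c α αv f -
          rcaIotaX W κ c α αv f * rcaY W κ c α αv v =
        κ • rcaIotaX W κ c α αv (D f) -
          ∑ s ∈ Finset.univ.filter (fun s : W => IsReflection (s : 𝔥 ≃ₗ[ℂ] 𝔥)),
            (c s * α s v) • (rcaIotaX W κ c α αv (gs s) * rcaT W κ c α αv s))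
    ∧
    (∀ (x : Module.Dual ℂ 𝔥) (g : SymmAlg ℂ 𝔥)
      (D' : SymmAlg ℂ 𝔥 →ₗ[ℂ] SymmAlg ℂ 𝔥),
      (∀ a b, D' (a * b) = D' a * b + a * D' b) →
      (∀ u : 𝔥, D' (symmMk ℂ 𝔥 u) = algebraMap ℂ _ (x u)) →
      ∀ Gs : W → SymmAlg ℂ 𝔥,
      (∀ s : W, IsReflection (s : 𝔥 ≃ₗ[ℂ] 𝔥) →
        symmMk ℂ 𝔥 (αv s) * Gs s = g - symmActH 𝔥 ((s⁻¹ : W) : 𝔥 ≃ₗ[ℂ] 𝔥) g) →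
      rcaIotaY W κ c α αv g * rcaX W κ c α αv x -
          rcaX W κ c α αv x * rcaIotaY W κ c α αv g =
        κ • rcaIotaY W κ c α αv (D' g) -
          ∑ s ∈ Finset.univ.filter (fun s : W => IsReflection (s : 𝔥 ≃ₗ[ℂ] 𝔥)),
            (c s * x (αv s)) • (rcaT W κ c α αv s * rcaIotaY W κ c α αv (Gs s))) := by
  constructor
  · intro v f D hD hDx gs hgs
    obtain ⟨gs0, h0, hid⟩ := part1 W κ c α αv hα v D hD hDx f
    rw [hid]
    congr 1
    refine Finset.sum_congr rfl fun s hsF => ?_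
    have hs : IsReflection ((s : 𝔥 ≃ₗ[ℂ] 𝔥)) := (Finset.mem_filter.mp hsF).2
    have he : gs s = gs0 s :=
      symmMk_mul_cancel (alpha_ne_zero W α αv hα s hs)
        (by rw [hgs s hs, h0 s hs])
    rw [he]
  · intro x g D' hD' hDu Gs hGs
    obtain ⟨Gs0, h0, hid⟩ := part2 W κ c α αv hα x D' hD' hDu g
    rw [hid]
    congr 1
    refine Finset.sum_congr rfl fun s hsF => ?_
    have hs : IsReflection ((s : 𝔥 ≃ₗ[ℂ] 𝔥)) := (Finset.mem_filter.mp hsF).2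
    have he : Gs s = Gs0 s :=
      symmMk_mul_cancel (alphav_ne_zero W α αv hα s hs)
        (by rw [hGs s hs, h0 s hs])
    rw [he]


end
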